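/- Let σ ∈ S_n and let 2 ≤ i ≤ n−1 be such that the values i and i+1 do not appear in consecutive positions in σ. Then the permutation σ' obtained from σ by swapping the values i and i+1 has the same peak set as σ. -/
import Mathlib


/-- Hamming distance on permutations of `Fin n`. -/
def dH (n : ℕ) (σ ρ : Equiv.Perm (Fin n)) : ℕ :=
  (Finset.univ.filter (fun i => σ i ≠ ρ i)).card

/-- ℓ∞ distance on permutations of `Fin n`. -/
def dL (n : ℕ) (σ ρ : Equiv.Perm (Fin n)) : ℕ :=
  Finset.univ.sup (fun i => (((σ i : ℕ) : ℤ) - ((ρ i : ℕ) : ℤ)).natAbs)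

/-- Kendall-Tau distance: number of deranged pairs. -/
def dK (n : ℕ) (σ ρ : Equiv.Perm (Fin n)) : ℕ :=
  (Finset.univ.filter (fun p : Fin n × Fin n =>
    p.1 < p.2 ∧ (((σ p.1 : ℕ) : ℤ) - ((σ p.2 : ℕ) : ℤ)) *
      (((ρ p.1 : ℕ) : ℤ) - ((ρ p.2 : ℕ) : ℤ)) < 0)).card

/-- `τ` is an adjacent transposition `(i, i+1)`. -/
def IsAdjTrans (n : ℕ) (τ : Equiv.Perm (Fin n)) : Prop :=
  ∃ (i : ℕ) (h : i + 1 < n), τ = Equiv.swap ⟨i, Nat.lt_of_succ_lt h⟩ ⟨i + 1, h⟩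

/-- Minimal number of adjacent transpositions transforming `σ` into `ρ`
(acting by left multiplication). -/
noncomputable def dK' (n : ℕ) (σ ρ : Equiv.Perm (Fin n)) : ℕ :=
  sInf {m | ∃ L : List (Equiv.Perm (Fin n)), L.length = m ∧
    (∀ τ ∈ L, IsAdjTrans n τ) ∧ L.prod * σ = ρ}

/-- The peak set of `σ`, with 1-based positions: `j ∈ {2, …, n-1}` is a peak if
`σ_{j-1} < σ_j > σ_{j+1}` in one-line notation (so 0-based indices `j-2, j-1, j`). -/
def peaks (n : ℕ) (σ : Equiv.Perm (Fin n)) : Finset ℕ :=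
  (Finset.Icc 2 (n - 1)).filter (fun j =>
    ∃ (h1 : j - 2 < n) (h2 : j - 1 < n) (h3 : j < n),
      σ ⟨j - 2, h1⟩ < σ ⟨j - 1, h2⟩ ∧ σ ⟨j, h3⟩ < σ ⟨j - 1, h2⟩)


lemma swap_consec_lt_iff {n : ℕ} (a b u v : Fin n) (hab : (a:ℕ)+1 = b)
    (h1 : ¬(u = a ∧ v = b)) (h2 : ¬(u = b ∧ v = a)) :
    Equiv.swap a b u < Equiv.swap a b v ↔ u < v := by
  simp only [Equiv.swap_apply_def]
  split_ifs <;> simp only [Fin.ext_iff, Fin.lt_def, not_and] at * <;> omega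

set_option maxHeartbeats 1000000 in
/-- swapping non-consecutively-placed values `i` and `i+1`
(1-based values, i.e. 0-based `i-1` and `i`) preserves the peak set. -/
theorem swap_values_preserves_peaks (n i : ℕ) (σ : Equiv.Perm (Fin n))
    (hi2 : 2 ≤ i) (hin : i ≤ n - 1) (hn : 1 ≤ n)
    (hnc : ((((σ⁻¹ ⟨i - 1, by omega⟩ : Fin n) : ℕ) : ℤ) -
        (((σ⁻¹ ⟨i, by omega⟩ : Fin n) : ℕ) : ℤ)).natAbs ≠ 1) :
    peaks n (Equiv.swap ⟨i - 1, by omega⟩ ⟨i, by omega⟩ * σ) = peaks n σ := by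
  have ha : i - 1 < n := by omega
  have hb : i < n := by omega
  set a : Fin n := ⟨i-1, ha⟩ with haa
  set b : Fin n := ⟨i, hb⟩ with hbb
  have hab : (a:ℕ)+1 = (b:ℕ) := by simp [haa, hbb]; omega
  have key : ∀ x y : Fin n, ((x:ℕ)+1 = (y:ℕ) ∨ (y:ℕ)+1 = (x:ℕ)) →
      ((Equiv.swap a b * σ) x < (Equiv.swap a b * σ) y ↔ σ x < σ y) := by
    intro x y hxy
    have h1 : ¬(σ x = a ∧ σ y = b) := by
      rintro ⟨hx, hy⟩
      apply hnc
      have e1 : σ⁻¹ a = x := by simp [← hx]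
      have e2 : σ⁻¹ b = y := by simp [← hy]
      rw [e1, e2]
      omega
    have h2 : ¬(σ x = b ∧ σ y = a) := by
      rintro ⟨hx, hy⟩
      apply hnc
      have e1 : σ⁻¹ a = y := by simp [← hy]
      have e2 : σ⁻¹ b = x := by simp [← hx]
      rw [e1, e2]
      omega
    simp only [Equiv.Perm.mul_apply]
    exact swap_consec_lt_iff a b (σ x) (σ y) hab h1 h2
  ext j
  simp only [peaks, Finset.mem_filter, Finset.mem_Icc]
  constructor
  · rintro ⟨hj, h1, h2, h3, hA, hB⟩
    exact ⟨hj, h1, h2, h3, (key _ _ (by simp; omega)).mp hA,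
      (key _ _ (by simp; omega)).mp hB⟩
  · rintro ⟨hj, h1, h2, h3, hA, hB⟩
    exact ⟨hj, h1, h2, h3, (key _ _ (by simp; omega)).mpr hA,
      (key _ _ (by simp; omega)).mpr hB⟩
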